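/- For ℓ ∈ {2, 3}, every proper subgroup H of GL₂(ℤ/ℓℤ) with det(H) = (ℤ/ℓℤ)ˣ satisfies [H,H] ⊊ [GL₂(ℤ/ℓℤ), GL₂(ℤ/ℓℤ)]. -/

import Mathlib

open Matrix

section Aux

open scoped commutatorElement

abbrev G3 := GL (Fin 2) (ZMod 3)
abbrev G2 := GL (Fin 2) (ZMod 2)

/-- helper to build explicit elements of `GL₂(ℤ/3)`. -/
def u3 (M N : Matrix (Fin 2) (Fin 2) (ZMod 3))
    (h1 : M * N = 1 := by decide) (h2 : N * M = 1 := by decide) : G3 :=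
  ⟨M, N, h1, h2⟩

/-- helper to build explicit elements of `GL₂(ℤ/2)`. -/
def u2 (M N : Matrix (Fin 2) (Fin 2) (ZMod 2))
    (h1 : M * N = 1 := by decide) (h2 : N * M = 1 := by decide) : G2 :=
  ⟨M, N, h1, h2⟩

def pr : Fin 13 → G3 × G3 :=
  ![(u3 !![0,1;1,0] !![0,1;1,0], u3 !![0,1;1,0] !![0,1;1,0]),
    (u3 !![0,1;1,0] !![0,1;1,0], u3 !![0,1;1,1] !![2,1;1,0]),
    (u3 !![0,1;1,0] !![0,1;1,0], u3 !![0,1;1,2] !![1,1;1,0]),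
    (u3 !![0,1;1,0] !![0,1;1,0], u3 !![0,1;2,0] !![0,2;1,0]),
    (u3 !![0,1;1,0] !![0,1;1,0], u3 !![0,1;2,1] !![1,2;1,0]),
    (u3 !![0,1;1,0] !![0,1;1,0], u3 !![0,1;2,2] !![2,2;1,0]),
    (u3 !![0,1;1,0] !![0,1;1,0], u3 !![1,1;0,1] !![1,2;0,1]),
    (u3 !![0,1;1,0] !![0,1;1,0], u3 !![1,1;0,2] !![1,1;0,2]),
    (u3 !![0,1;1,0] !![0,1;1,0], u3 !![1,1;1,2] !![2,2;2,1]),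
    (u3 !![0,1;1,0] !![0,1;1,0], u3 !![1,2;0,1] !![1,1;0,1]),
    (u3 !![0,1;1,0] !![0,1;1,0], u3 !![1,2;0,2] !![1,2;0,2]),
    (u3 !![0,1;1,0] !![0,1;1,0], u3 !![1,2;1,1] !![2,2;1,2]),
    (u3 !![0,1;1,1] !![2,1;1,0], u3 !![0,1;1,2] !![1,1;1,0])]

def dd : Fin 13 → G3 := fun i => ⁅(pr i).1, (pr i).2⁆

lemma dd_injective : Function.Injective dd := by decide

lemma dd_mem (i : Fin 13) : dd i ∈ commutator G3 := by
  rw [commutator_def]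
  exact Subgroup.commutator_mem_commutator (Subgroup.mem_top _) (Subgroup.mem_top _)

lemma card_commutator_G3 : 13 ≤ Nat.card (commutator G3) := by
  have hinj : Function.Injective
      (fun i : Fin 13 => (⟨dd i, dd_mem i⟩ : commutator G3)) := by
    intro i j h
    exact dd_injective (congrArg Subtype.val h)
  simpa using Nat.card_le_card_of_injective _ hinj

lemma card_G3 : Nat.card G3 = 48 := by
  haveI : Fact (Nat.Prime 3) := ⟨by norm_num⟩
  rw [Matrix.card_GL_field]
  decide

lemma card_G2 : Nat.card G2 = 6 := by
  haveI : Fact (Nat.Prime 2) := ⟨by norm_num⟩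
  rw [Matrix.card_GL_field]
  decide

lemma case2 (H : Subgroup G2) (hH : H ≠ ⊤) :
    ⁅H, H⁆ < commutator G2 := by
  -- the commutator subgroup of `H` is trivial since `H` has order `1`, `2` or `3`
  have hdvd : Nat.card H ∣ 6 := card_G2 ▸ Subgroup.card_subgroup_dvd_card H
  have hne : Nat.card H ≠ 6 := by
    intro h
    exact hH (Subgroup.eq_top_of_card_eq H (h.trans card_G2.symm))
  have hle6 : Nat.card H ≤ 6 := Nat.le_of_dvd (by norm_num) hdvd
  have hcomm : ∀ x y : H, x * y = y * x := by
    interval_cases h : Nat.card H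
    · exfalso; exact Nat.card_ne_zero.mpr ⟨One.instNonempty, inferInstance⟩ h
    · intro x y
      have : H = ⊥ := Subgroup.card_eq_one.mp h
      subst this
      have hx := x.2; have hy := y.2
      simp only [Subgroup.mem_bot] at hx hy
      ext; simp [hx, hy]
    · haveI : Fact (Nat.Prime 2) := ⟨by norm_num⟩
      haveI := isCyclic_of_prime_card (p := 2) h
      letI := IsCyclic.commGroup (α := H)
      exact fun x y => mul_comm x y
    · haveI : Fact (Nat.Prime 3) := ⟨by norm_num⟩
      haveI := isCyclic_of_prime_card (p := 3) h
      letI := IsCyclic.commGroup (α := H)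
      exact fun x y => mul_comm x y
    · exact absurd hdvd (by norm_num)
    · exact absurd hdvd (by norm_num)
    · exact absurd rfl hne
  have hbot : ⁅H, H⁆ = ⊥ := by
    rw [Subgroup.commutator_eq_bot_iff_le_centralizer]
    intro x hx y hy
    have := hcomm ⟨y, hy⟩ ⟨x, hx⟩
    exact congrArg Subtype.val this
  rw [hbot, bot_lt_iff_ne_bot]
  intro hb
  have hmem : ⁅u2 !![0,1;1,0] !![0,1;1,0], u2 !![1,1;0,1] !![1,1;0,1]⁆ ∈ commutator G2 := by
    rw [commutator_def]
    exact Subgroup.commutator_mem_commutator (Subgroup.mem_top _) (Subgroup.mem_top _)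
  rw [hb, Subgroup.mem_bot] at hmem
  exact absurd hmem (by decide)

lemma case3 (H : Subgroup G3) (hH : H ≠ ⊤)
    (hdet : H.map (Matrix.GeneralLinearGroup.det) = ⊤) :
    ⁅H, H⁆ < commutator G3 := by
  set ψ : G3 →* (ZMod 3)ˣ := Matrix.GeneralLinearGroup.det with hψ
  set K : Subgroup G3 := H ⊓ ψ.ker with hK
  -- card H ≤ 24
  have hdvd : Nat.card H ∣ 48 := card_G3 ▸ Subgroup.card_subgroup_dvd_card H
  have hne : Nat.card H ≠ 48 := by
    intro h
    exact hH (Subgroup.eq_top_of_card_eq H (h.trans card_G3.symm))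
  have h24 : Nat.card H ≤ 24 := by
    rcases hdvd with ⟨k, hk⟩
    rcases Nat.lt_or_ge k 2 with hk2 | hk2
    · interval_cases k <;> omega
    · have : Nat.card H ≠ 0 := Nat.card_ne_zero.mpr ⟨One.instNonempty, inferInstance⟩
      nlinarith [Nat.card H]
  -- card H = 2 * card K
  have hcardK : Nat.card H = 2 * Nat.card K := by
    set φ : H →* (ZMod 3)ˣ := ψ.comp H.subtype with hφ
    have hrange : φ.range = ⊤ := by
      rw [hφ, MonoidHom.range_comp, Subgroup.range_subtype, hdet]
    have hkerφ : φ.ker = K.subgroupOf H := by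
      rw [hφ, ← MonoidHom.comap_ker, hK, Subgroup.inf_subgroupOf_left]
      rfl
    have e1 : Nat.card (H ⧸ φ.ker) = 2 := by
      rw [Nat.card_congr (QuotientGroup.quotientKerEquivRange φ).toEquiv, hrange]
      rw [Nat.card_congr (Subgroup.topEquiv).toEquiv, Nat.card_eq_fintype_card]
      decide
    have e2 : Nat.card φ.ker = Nat.card K := by
      rw [hkerφ]
      exact Nat.card_congr (Subgroup.subgroupOfEquivOfLe inf_le_left).toEquiv
    calc Nat.card H = Nat.card (H ⧸ φ.ker) * Nat.card φ.ker :=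
          Subgroup.card_eq_card_quotient_mul_card_subgroup φ.ker
      _ = 2 * Nat.card K := by rw [e1, e2]
  -- ⁅H,H⁆ ≤ K
  have hHHK : ⁅H, H⁆ ≤ K := by
    rw [Subgroup.commutator_le]
    intro g₁ h₁ g₂ h₂
    refine Subgroup.mem_inf.mpr ⟨?_, ?_⟩
    · rw [commutatorElement_def]
      exact mul_mem (mul_mem (mul_mem h₁ h₂) (inv_mem h₁)) (inv_mem h₂)
    show ψ ⁅g₁, g₂⁆ = 1
    rw [map_commutatorElement]
    exact commutatorElement_eq_one_iff_commute.mpr (mul_comm _ _)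
  -- conclude
  have hle : ⁅H, H⁆ ≤ commutator G3 := by
    rw [commutator_def]
    exact Subgroup.commutator_mono le_top le_top
  refine lt_of_le_of_ne hle ?_
  intro heq
  have h1 : Nat.card (commutator G3) ≤ Nat.card K := heq ▸ Subgroup.card_le_of_le hHHK
  have h2 := card_commutator_G3
  omega

end Aux

/-- For `ℓ ∈ {2,3}`, every proper subgroup of `GL₂(ℤ/ℓℤ)` with full determinant image has
commutator subgroup strictly smaller than that of `GL₂(ℤ/ℓℤ)`. -/
theorem commutator_proper_of_proper_subgroup
    (ℓ : ℕ) (hℓ : ℓ = 2 ∨ ℓ = 3)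
    (H : Subgroup (GL (Fin 2) (ZMod ℓ))) (hH : H ≠ ⊤)
    (hdet : H.map (Matrix.GeneralLinearGroup.det) = ⊤) :
    ⁅H, H⁆ < commutator (GL (Fin 2) (ZMod ℓ)) := by
  rcases hℓ with rfl | rfl
  · exact case2 H hH
  · exact case3 H hH hdet
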